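/- The map ψ restricts to a bijection between the set C_n of Łukasiewicz paths of length n with no flat step at positive height and in which every up step is immediately followed by a down step, and the set of Motzkin paths of length n avoiding the consecutive pattern UU. -/

import Mathlib

/-- A Łukasiewicz path: vertical step components, each `≥ -1`, all partial sums
nonnegative, total sum `0`. -/
def IsLukas (w : List ℤ) : Prop :=
  (∀ s ∈ w, -1 ≤ s) ∧ (∀ k, 0 ≤ (w.take k).sum) ∧ w.sum = 0

/-- A Motzkin path: a Łukasiewicz path using only steps `(1,1)`, `(1,0)`, `(1,-1)`. -/
def IsMotzkin (w : List ℤ) : Prop :=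
  IsLukas w ∧ ∀ s ∈ w, s ≤ 1

/-- No flat step at positive height: every flat step starts at ordinate `0`. -/
def NoFlatAtPosHeight (w : List ℤ) : Prop :=
  ∀ j : ℕ, w[j]? = some 0 → (w.take j).sum = 0

/-- Every up step is immediately followed by a down step. -/
def UpThenDown (w : List ℤ) : Prop :=
  ∀ j : ℕ, ∀ s : ℤ, w[j]? = some s → 1 ≤ s → w[j + 1]? = some (-1)

/-- Avoiding the consecutive pattern `UU`. -/
def AvoidsUU (w : List ℤ) : Prop :=
  ∀ j : ℕ, ¬(w[j]? = some 1 ∧ w[j + 1]? = some 1)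

/-- `ψ` satisfies the defining recursive equations: `ψ(ε) = ε`,
`ψ(F L) = F ψ(L)`, and
`ψ(U_k L₁ D L₂ D … L_k D L) = U ψ(L₁) F ψ(L₂) F … ψ(L_k) D ψ(L)`. -/
def PsiEquations (ψ : List ℤ → List ℤ) : Prop :=
  ψ [] = [] ∧
  (∀ L : List ℤ, IsLukas L → ψ (0 :: L) = 0 :: ψ L) ∧
  (∀ (Ls : List (List ℤ)) (L : List ℤ), Ls ≠ [] →
    (∀ M ∈ Ls, IsLukas M) → IsLukas L →
    ψ ((Ls.length : ℤ) :: ((Ls.map fun M => M ++ [(-1 : ℤ)]).flatten ++ L)) =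
      1 :: ((List.intersperse [(0 : ℤ)] (Ls.map ψ)).flatten ++ (-1 : ℤ) :: ψ L))

namespace PsiAux

def low (w : List ℤ) : Prop := ∀ s ∈ w, (-1 : ℤ) ≤ s
def hi (w : List ℤ) : Prop := ∀ s ∈ w, s ≤ (1 : ℤ)

def prefOK : ℤ → List ℤ → Prop
  | _, [] => True
  | h, s :: t => 0 ≤ h + s ∧ prefOK (h + s) t

def sp : ℤ → List ℤ → Prop
  | _, [] => True
  | h, s :: t => 0 < h ∧ sp (h + s) t

def noFlat : ℤ → List ℤ → Prop
  | _, [] => True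
  | h, s :: t => (s = 0 → h = 0) ∧ noFlat (h + s) t

def nlf : ℤ → List ℤ → Prop
  | _, [] => True
  | h, s :: t => (s = 0 → h ≠ 0) ∧ nlf (h + s) t

def utd : List ℤ → Prop
  | [] => True
  | [s] => s < 1
  | s :: t :: r => (1 ≤ s → t = -1) ∧ utd (t :: r)

def auu : List ℤ → Prop
  | [] => True
  | [_] => True
  | s :: t :: r => ¬(s = 1 ∧ t = 1) ∧ auu (t :: r)

def headZero : List ℤ → Prop
  | [] => True
  | s :: _ => s = 0

def utdF (w : List ℤ) : Prop := ∀ y, utd y → utd (w ++ y)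
def auuF (w : List ℤ) : Prop := ∀ y, auu y → auu (w ++ y)

@[simp] lemma prefOK_nil (h : ℤ) : prefOK h [] := trivial
@[simp] lemma prefOK_cons {h s : ℤ} {t : List ℤ} :
    prefOK h (s :: t) ↔ 0 ≤ h + s ∧ prefOK (h + s) t := Iff.rfl
@[simp] lemma sp_nil (h : ℤ) : sp h [] := trivial
@[simp] lemma sp_cons {h s : ℤ} {t : List ℤ} :
    sp h (s :: t) ↔ 0 < h ∧ sp (h + s) t := Iff.rfl
@[simp] lemma noFlat_nil (h : ℤ) : noFlat h [] := trivial
@[simp] lemma noFlat_cons {h s : ℤ} {t : List ℤ} :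
    noFlat h (s :: t) ↔ (s = 0 → h = 0) ∧ noFlat (h + s) t := Iff.rfl
@[simp] lemma nlf_nil (h : ℤ) : nlf h [] := trivial
@[simp] lemma nlf_cons {h s : ℤ} {t : List ℤ} :
    nlf h (s :: t) ↔ (s = 0 → h ≠ 0) ∧ nlf (h + s) t := Iff.rfl

lemma prefOK_congr {h h' : ℤ} (e : h = h') {w : List ℤ} (hw : prefOK h w) : prefOK h' w := e ▸ hw
lemma sp_congr {h h' : ℤ} (e : h = h') {w : List ℤ} (hw : sp h w) : sp h' w := e ▸ hw
lemma noFlat_congr {h h' : ℤ} (e : h = h') {w : List ℤ} (hw : noFlat h w) : noFlat h' w := e ▸ hw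
lemma nlf_congr {h h' : ℤ} (e : h = h') {w : List ℤ} (hw : nlf h w) : nlf h' w := e ▸ hw

lemma prefOK_append {x y : List ℤ} : ∀ {h : ℤ},
    prefOK h (x ++ y) ↔ prefOK h x ∧ prefOK (h + x.sum) y := by
  induction x with
  | nil => intro h; simp
  | cons s t ih => intro h; simp [ih, and_assoc, add_assoc]

lemma sp_append {x y : List ℤ} : ∀ {h : ℤ},
    sp h (x ++ y) ↔ sp h x ∧ sp (h + x.sum) y := by
  induction x with
  | nil => intro h; simp
  | cons s t ih => intro h; simp [ih, and_assoc, add_assoc]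

lemma noFlat_append {x y : List ℤ} : ∀ {h : ℤ},
    noFlat h (x ++ y) ↔ noFlat h x ∧ noFlat (h + x.sum) y := by
  induction x with
  | nil => intro h; simp
  | cons s t ih => intro h; simp [ih, and_assoc, add_assoc]

lemma nlf_append {x y : List ℤ} : ∀ {h : ℤ},
    nlf h (x ++ y) ↔ nlf h x ∧ nlf (h + x.sum) y := by
  induction x with
  | nil => intro h; simp
  | cons s t ih => intro h; simp [ih, and_assoc, add_assoc]

lemma prefOK_mono {h h' : ℤ} (hh : h ≤ h') : ∀ {w : List ℤ}, prefOK h w → prefOK h' w := by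
  intro w
  induction w generalizing h h' with
  | nil => intro; trivial
  | cons s t ih =>
    rintro ⟨h1, h2⟩
    exact ⟨by linarith, ih (by linarith) h2⟩

lemma prefOK_sum_nonneg {h : ℤ} (h0 : 0 ≤ h) : ∀ {w : List ℤ}, prefOK h w → 0 ≤ h + w.sum := by
  intro w
  induction w generalizing h with
  | nil => intro; simpa
  | cons s t ih => rintro ⟨h1, h2⟩; simpa [add_assoc] using ih h1 h2

lemma sp_of_prefOK {h h' : ℤ} (h0 : 0 ≤ h) (hh : h < h') :
    ∀ {w : List ℤ}, prefOK h w → sp h' w := by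
  intro w
  induction w generalizing h h' with
  | nil => intro; trivial
  | cons s t ih =>
    rintro ⟨h1, h2⟩
    exact ⟨by linarith, ih h1 (by linarith) h2⟩

lemma noFlat_of_not_mem {w : List ℤ} (hw : (0:ℤ) ∉ w) : ∀ {h : ℤ}, noFlat h w := by
  induction w with
  | nil => intro; trivial
  | cons s t ih =>
    intro h
    simp only [List.mem_cons, not_or] at hw
    exact ⟨fun e => absurd e.symm hw.1, ih hw.2⟩

lemma not_mem_of_noFlat_sp : ∀ {w : List ℤ} {h : ℤ}, noFlat h w → sp h w → (0:ℤ) ∉ w := by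
  intro w
  induction w with
  | nil => simp
  | cons s t ih =>
    intro h hn hs
    simp only [List.mem_cons, not_or]
    refine ⟨fun e => ?_, ih hn.2 hs.2⟩
    · have := hn.1 e.symm; have := hs.1; omega

lemma nlf_of_sp : ∀ {w : List ℤ} {h : ℤ}, sp h w → nlf h w := by
  intro w
  induction w with
  | nil => intro h _; trivial
  | cons s t ih => intro h hs; exact ⟨fun _ => by have := hs.1; omega, ih hs.2⟩

end PsiAux
namespace PsiAux

@[simp] lemma utd_nil : utd [] := trivial
@[simp] lemma utd_singleton {s : ℤ} : utd [s] ↔ s < 1 := Iff.rfl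
@[simp] lemma utd_cons_cons {s t : ℤ} {r : List ℤ} :
    utd (s :: t :: r) ↔ (1 ≤ s → t = -1) ∧ utd (t :: r) := Iff.rfl
@[simp] lemma auu_nil : auu [] := trivial
@[simp] lemma auu_singleton {s : ℤ} : auu [s] := trivial
@[simp] lemma auu_cons_cons {s t : ℤ} {r : List ℤ} :
    auu (s :: t :: r) ↔ ¬(s = 1 ∧ t = 1) ∧ auu (t :: r) := Iff.rfl

lemma utd_tail {a : ℤ} {l : List ℤ} (h : utd (a :: l)) : utd l := by
  cases l with
  | nil => trivial
  | cons b r => exact h.2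

lemma utd_cons_lt {a : ℤ} (ha : a < 1) {l : List ℤ} (h : utd l) : utd (a :: l) := by
  cases l with
  | nil => exact ha
  | cons b r => exact ⟨fun h1 => absurd h1 (by omega), h⟩

lemma utd_cons_cons' {a b : ℤ} {l : List ℤ} (hab : 1 ≤ a → b = -1) (h : utd (b :: l)) :
    utd (a :: b :: l) := ⟨hab, h⟩

lemma utd_append_right : ∀ {x y : List ℤ}, utd (x ++ y) → utd y := by
  intro x
  induction x with
  | nil => intro y h; exact h
  | cons a t ih => intro y h; exact ih (utd_tail h)

lemma utd_append_left : ∀ {x : List ℤ} {y : List ℤ}, utd (x ++ y) →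
    (∀ z, x.getLast? = some z → z < 1) → utd x := by
  intro x
  induction x with
  | nil => intro y _ _; trivial
  | cons a t ih =>
    intro y h hlast
    cases t with
    | nil => exact hlast a rfl
    | cons b r =>
      refine utd_cons_cons' (by exact h.1) (ih (y := y) h.2 ?_)
      intro z hz
      exact hlast z (by simpa using hz)

lemma auu_tail {a : ℤ} {l : List ℤ} (h : auu (a :: l)) : auu l := by
  cases l with
  | nil => trivial
  | cons b r => exact h.2

lemma auu_cons {a : ℤ} (ha : a ≠ 1) {l : List ℤ} (h : auu l) : auu (a :: l) := by
  cases l with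
  | nil => trivial
  | cons b r => exact ⟨fun hc => ha hc.1, h⟩

lemma auu_cons' {a : ℤ} {l : List ℤ} (hh : ∀ b, l.head? = some b → ¬(a = 1 ∧ b = 1))
    (h : auu l) : auu (a :: l) := by
  cases l with
  | nil => trivial
  | cons b r => exact ⟨hh b rfl, h⟩

lemma auu_append_right : ∀ {x y : List ℤ}, auu (x ++ y) → auu y := by
  intro x
  induction x with
  | nil => intro y h; exact h
  | cons a t ih => intro y h; exact ih (auu_tail h)

lemma auu_append_left : ∀ {x y : List ℤ}, auu (x ++ y) → auu x := by
  intro x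
  induction x with
  | nil => exact fun _ => auu_nil
  | cons a t ih =>
    intro y h
    cases t with
    | nil => trivial
    | cons b r => exact ⟨h.1, ih (y := y) h.2⟩

/-- conversion lemmas -/

lemma prefOK_iff {w : List ℤ} : ∀ {h : ℤ}, 0 ≤ h →
    (prefOK h w ↔ ∀ k, 0 ≤ h + (w.take k).sum) := by
  induction w with
  | nil => intro h h0; simp [h0]
  | cons s t ih =>
    intro h h0
    constructor
    · rintro ⟨h1, h2⟩ k
      cases k with
      | zero => simpa
      | succ j => simpa [add_assoc] using ((ih h1).1 h2) j
    · intro hk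
      have h1 : 0 ≤ h + s := by simpa using hk 1
      exact ⟨h1, (ih h1).2 (fun k => by simpa [add_assoc] using hk (k+1))⟩

lemma noFlat_iff {w : List ℤ} : ∀ {h : ℤ},
    (noFlat h w ↔ ∀ j, w[j]? = some 0 → h + (w.take j).sum = 0) := by
  induction w with
  | nil => intro h; simp
  | cons s t ih =>
    intro h
    constructor
    · rintro ⟨h1, h2⟩ j hj
      cases j with
      | zero => simp at hj; simpa [hj] using h1 hj
      | succ i => simpa [add_assoc] using (ih.1 h2) i (by simpa using hj)
    · intro hk
      refine ⟨fun e => by simpa [e] using hk 0 (by simp [e]), ih.2 (fun j hj => ?_)⟩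
      simpa [add_assoc] using hk (j+1) (by simpa using hj)

lemma nlf_iff {w : List ℤ} : ∀ {h : ℤ},
    (nlf h w ↔ ∀ j, w[j]? = some 0 → h + (w.take j).sum ≠ 0) := by
  induction w with
  | nil => intro h; simp
  | cons s t ih =>
    intro h
    constructor
    · rintro ⟨h1, h2⟩ j hj
      cases j with
      | zero => simp at hj; simpa [hj] using h1 hj
      | succ i => simpa [add_assoc] using (ih.1 h2) i (by simpa using hj)
    · intro hk
      refine ⟨fun e => by simpa [e] using hk 0 (by simp [e]), ih.2 (fun j hj => ?_)⟩
      simpa [add_assoc] using hk (j+1) (by simpa using hj)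

lemma upThenDown_cons {a : ℤ} {l : List ℤ} :
    UpThenDown (a :: l) ↔ (1 ≤ a → l[0]? = some (-1)) ∧ UpThenDown l := by
  constructor
  · intro h
    refine ⟨fun h1 => by simpa using h 0 a rfl h1, fun j s hj h1 => by simpa using h (j+1) s (by simpa using hj) h1⟩
  · rintro ⟨h1, h2⟩ j s hj hs
    cases j with
    | zero => simp at hj; subst hj; simpa using h1 hs
    | succ i => simpa using h2 i s (by simpa using hj) hs

lemma utd_iff : ∀ {w : List ℤ}, UpThenDown w ↔ utd w := by
  intro w
  induction w with
  | nil => simp [UpThenDown]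
  | cons a l ih =>
    rw [upThenDown_cons, ih]
    cases l with
    | nil => simp [UpThenDown]
    | cons b r => simp

lemma avoidsUU_cons {a : ℤ} {l : List ℤ} :
    AvoidsUU (a :: l) ↔ ¬(a = 1 ∧ l[0]? = some 1) ∧ AvoidsUU l := by
  constructor
  · intro h
    refine ⟨fun hc => h 0 ⟨by simp [hc.1], by simpa using hc.2⟩, fun j hc => h (j+1) ⟨by simpa using hc.1, by simpa using hc.2⟩⟩
  · rintro ⟨h1, h2⟩ j hc
    cases j with
    | zero =>
      refine h1 ⟨by simpa using hc.1, by simpa using hc.2⟩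
    | succ i => exact h2 i ⟨by simpa using hc.1, by simpa using hc.2⟩

lemma auu_iff : ∀ {w : List ℤ}, AvoidsUU w ↔ auu w := by
  intro w
  induction w with
  | nil => simp [AvoidsUU]
  | cons a l ih =>
    rw [avoidsUU_cons, ih]
    cases l with
    | nil => simp [AvoidsUU]
    | cons b r => simp

end PsiAux
namespace PsiAux

/-- First crossing below the current level. -/
lemma cross : ∀ (w : List ℤ) (h : ℤ), 0 ≤ h → h + w.sum < 0 → low w →
    ∃ a b, w = a ++ -1 :: b ∧ h + a.sum = 0 ∧ prefOK h a := by
  intro w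
  induction w with
  | nil => intro h h0 hs _; simp at hs; omega
  | cons s t ih =>
    intro h h0 hs hlow
    by_cases hc : h + s < 0
    · have hs1 : (-1 : ℤ) ≤ s := hlow s (by simp)
      have : s = -1 ∧ h = 0 := by omega
      exact ⟨[], t, by simp [this.1], by simp [this.2], trivial⟩
    · push_neg at hc
      obtain ⟨a, b, e, ha, hp⟩ := ih (h + s) hc (by simp at hs; push_cast; linarith [hs]) 
        (fun z hz => hlow z (by simp [hz]))
      exact ⟨s :: a, b, by simp [e], by rw [List.sum_cons]; omega, ⟨hc, hp⟩⟩

/-- Split at first descent to relative level `-j`. -/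
lemma split_reach : ∀ (j : ℕ) (r : List ℤ), low r → prefOK (j : ℤ) r → r.sum = -(j : ℤ) →
    ∃ a b, r = a ++ b ∧ a.sum = -(j : ℤ) ∧ sp (j : ℤ) a ∧ prefOK 0 b ∧ b.sum = 0 := by
  intro j
  induction j with
  | zero =>
    intro r _ hp hs
    exact ⟨[], r, by simp, by simp, trivial, by simpa using hp, by simpa using hs⟩
  | succ j ih =>
    intro r hlow hp hs
    obtain ⟨a1, b1, e, ha1, hp1⟩ := cross r 0 le_rfl (by rw [hs]; push_cast; omega) hlow
    simp only [zero_add] at ha1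
    have hb1sum : b1.sum = -(j : ℤ) := by
      subst e; simp [ha1] at hs; push_cast at hs ⊢; omega
    have hb1low : low b1 := fun z hz => hlow z (by simp [e, hz])
    have hb1p : prefOK (j : ℤ) b1 := by
      subst e
      rw [prefOK_append] at hp
      have := hp.2
      rw [ha1] at this
      simp only [add_zero] at this
      obtain ⟨_, h2⟩ := this
      exact prefOK_congr (by push_cast; omega) h2
    obtain ⟨a2, b, e2, ha2, hsp2, hbp, hbs⟩ := ih b1 hb1low hb1p hb1sum
    refine ⟨a1 ++ -1 :: a2, b, by rw [e, e2]; simp, ?_, ?_, hbp, hbs⟩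
    · rw [List.sum_append, List.sum_cons, ha1, ha2]; push_cast; ring
    · rw [sp_append]
      constructor
      · exact sp_of_prefOK le_rfl (by push_cast; omega) hp1
      · rw [ha1]
        refine ⟨by push_cast; omega, sp_congr (by push_cast; omega) hsp2⟩

/-- Split a Motzkin segment at the first flat step at relative level 0 (or the end). -/
lemma split_zero : ∀ (r : List ℤ) (h : ℤ),
    ∃ a b, r = a ++ b ∧ nlf h a ∧ (b = [] ∨ ∃ b', b = 0 :: b' ∧ h + a.sum = 0) := by
  intro r
  induction r with
  | nil => intro h; exact ⟨[], [], by simp, trivial, Or.inl rfl⟩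
  | cons s t ih =>
    intro h
    by_cases hc : s = 0 ∧ h = 0
    · exact ⟨[], s :: t, by simp, trivial, Or.inr ⟨t, by simp [hc.1], by simp [hc.2]⟩⟩
    · obtain ⟨a, b, e, hn, hb⟩ := ih (h + s)
      refine ⟨s :: a, b, by simp [e], ⟨fun e0 => fun eh => hc ⟨e0, eh⟩, hn⟩, ?_⟩
      rcases hb with h1 | ⟨b', e', hsum⟩
      · exact Or.inl h1
      · exact Or.inr ⟨b', e', by rw [List.sum_cons]; omega⟩

/-- The last element of a nonempty block ending at a first-reached minimum is `-1`. -/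
lemma last_neg {x : List ℤ} (hx : x ≠ []) (hlow : low x)
    (hd : x.sum < x.dropLast.sum) : x.getLast? = some (-1) := by
  set z := x.getLast hx with hz
  have hsplit : x.dropLast ++ [z] = x := List.dropLast_append_getLast hx
  have hsum : x.sum = x.dropLast.sum + z := by
    conv_lhs => rw [← hsplit]
    simp
  have hmem : z ∈ x := List.getLast_mem hx
  have h1 : (-1 : ℤ) ≤ z := hlow z hmem
  have h2 : z = -1 := by omega
  rw [List.getLast?_eq_getLast hx, ← hz, h2]

end PsiAux
namespace PsiAux

lemma low_cons {a : ℤ} (ha : -1 ≤ a) {w : List ℤ} (hw : low w) : low (a :: w) := by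
  intro s hs
  rcases List.mem_cons.mp hs with e | e
  · omega
  · exact hw s e

lemma hi_cons {a : ℤ} (ha : a ≤ 1) {w : List ℤ} (hw : hi w) : hi (a :: w) := by
  intro s hs
  rcases List.mem_cons.mp hs with e | e
  · omega
  · exact hw s e

lemma low_append {x y : List ℤ} (hx : low x) (hy : low y) : low (x ++ y) := by
  intro s hs
  rcases List.mem_append.mp hs with e | e
  · exact hx s e
  · exact hy s e

lemma hi_append {x y : List ℤ} (hx : hi x) (hy : hi y) : hi (x ++ y) := by
  intro s hs
  rcases List.mem_append.mp hs with e | e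
  · exact hx s e
  · exact hy s e

lemma low_nil : low [] := by intro s hs; simp at hs
lemma hi_nil : hi [] := by intro s hs; simp at hs

/-- uniqueness of the first-return decomposition -/
lemma firstret_aux {A B C D : List ℤ} (e : A ++ -1 :: B = C ++ -1 :: D)
    (sA : A.sum = 0) (pC : prefOK 0 C) (hlt : A.length < C.length) : False := by
  have h1 : C.take (A.length + 1) = A ++ [-1] := by
    have h := congrArg (List.take (A.length + 1)) e
    rw [List.take_append, List.take_append,
      List.take_of_length_le (by omega : A.length ≤ A.length + 1),
      Nat.add_sub_cancel_left,
      Nat.sub_eq_zero_of_le (by omega : A.length + 1 ≤ C.length)] at h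
    simpa using h.symm
  have h2 : 0 ≤ (C.take (A.length + 1)).sum := by simpa using (prefOK_iff le_rfl).1 pC (A.length + 1)
  rw [h1] at h2
  simp [sA] at h2

lemma firstret_unique {A B C D : List ℤ} (e : A ++ -1 :: B = C ++ -1 :: D)
    (sA : A.sum = 0) (sC : C.sum = 0) (pA : prefOK 0 A) (pC : prefOK 0 C) :
    A = C ∧ B = D := by
  rcases lt_trichotomy A.length C.length with h | h | h
  · exact (firstret_aux e sA pC h).elim
  · obtain ⟨h1, h2⟩ := List.append_inj e h
    exact ⟨h1, by injection h2⟩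
  · exact (firstret_aux e.symm sC pA h).elim

/-- uniqueness of the splitting at flats at level 0 -/
lemma seg_aux {a b c d : List ℤ} (e : a ++ b = c ++ d) (sc : c.sum = 0)
    (na : nlf 0 a) (hd : headZero d) (hlt : c.length < a.length) : False := by
  have hlen : a.length + b.length = c.length + d.length := by
    have := congrArg List.length e
    simpa using this
  obtain ⟨d', hd'⟩ : ∃ d', d = 0 :: d' := by
    cases d with
    | nil => simp at hlen; omega
    | cons x t => exact ⟨t, by simp only [headZero] at hd; rw [hd]⟩
  have h0 : a[c.length]? = some 0 := by
    have h := congrArg (fun l => l[c.length]?) e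
    rw [List.getElem?_append_left hlt, List.getElem?_append_right le_rfl] at h
    simpa [hd'] using h
  have h1 : a.take c.length = c := by
    have h := congrArg (List.take c.length) e
    rw [List.take_append, List.take_append,
      Nat.sub_eq_zero_of_le (le_of_lt hlt), Nat.sub_self, List.take_zero, List.take_zero,
      List.take_length] at h
    simpa using h
  have h2 := nlf_iff.1 na c.length h0
  rw [h1, sc] at h2
  simp at h2

lemma seg_unique {a b c d : List ℤ} (e : a ++ b = c ++ d) (sa : a.sum = 0) (sc : c.sum = 0)
    (na : nlf 0 a) (nc : nlf 0 c) (hb : headZero b) (hd : headZero d) :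
    a = c ∧ b = d := by
  rcases lt_trichotomy a.length c.length with h | h | h
  · exact (seg_aux e.symm sa nc hb h).elim
  · exact List.append_inj e h
  · exact (seg_aux e sc na hd h).elim

end PsiAux
namespace PsiAux

def FI (t : List (List ℤ)) : List ℤ := (List.intersperse [(0:ℤ)] (([]:List ℤ) :: t)).flatten

@[simp] lemma FI_nil : FI [] = [] := by simp [FI]

lemma FI_cons (a : List ℤ) (t : List (List ℤ)) : FI (a :: t) = 0 :: (a ++ FI t) := by
  cases t with
  | nil => simp [FI, List.intersperse]
  | cons b r => simp [FI, List.intersperse]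

inductive G : ℕ → List ℤ → List ℤ → Prop
  | nilC : G 0 [] []
  | flat {w m : List ℤ} : G 0 w m → G 0 (0 :: w) (0 :: m)
  | upC {j : ℕ} {s s' w m : List ℤ} : G (j+2) s s' → G 0 w m →
      G 0 (((j : ℤ) + 1) :: -1 :: (s ++ w)) (1 :: s' ++ -1 :: m)
  | nilD : G 1 [] []
  | upD {j : ℕ} {s s' w m : List ℤ} : G (j+2) s s' → G 1 w m →
      G 1 (((j : ℤ) + 1) :: -1 :: (s ++ w)) (1 :: s' ++ -1 :: m)
  | nilS : G 2 [] []
  | consS {j : ℕ} {d md s s' : List ℤ} : G 1 d md → G (j+2) s s' →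
      G (j+3) (d ++ -1 :: s) (0 :: (md ++ s'))

structure InvC (w m : List ℤ) : Prop where
  wlow : low w
  wpre : prefOK 0 w
  wsum : w.sum = 0
  wnf : noFlat 0 w
  wutd : utdF w
  mlow : low m
  mhi : hi m
  mpre : prefOK 0 m
  msum : m.sum = 0
  mauu : auuF m
  len : w.length = m.length

structure InvS (j : ℕ) (s s' : List ℤ) : Prop where
  wlow : low s
  wpre : prefOK (j : ℤ) s
  wsum : s.sum = -(j : ℤ)
  wnm : (0:ℤ) ∉ s
  wutd : utdF s
  mlow : low s'
  mhi : hi s'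
  mpre : prefOK 0 s'
  msum : s'.sum = 0
  mauu : auuF s'
  len : s.length = s'.length
  mhz : headZero s'

def Inv : ℕ → List ℤ → List ℤ → Prop
  | 0, w, m => InvC w m
  | 1, w, m => InvC w m ∧ (0:ℤ) ∉ w ∧ nlf 0 m
  | (j+2), s, s' => InvS j s s'

lemma inv_of_G : ∀ {mode : ℕ} {x y : List ℤ}, G mode x y → Inv mode x y := by
  intro mode x y hg
  induction hg with
  | nilC =>
    exact ⟨low_nil, trivial, rfl, trivial, fun y hy => hy, low_nil, hi_nil, trivial, rfl,
      fun y hy => hy, rfl⟩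
  | flat hg ih =>
    obtain ⟨w1, w2, w3, w4, w5, m1, m2, m3, m4, m5, hlen⟩ := ih
    refine ⟨low_cons (by norm_num) w1, ⟨by norm_num, prefOK_congr (by ring) w2⟩,
      by simpa using w3, ⟨fun _ => rfl, noFlat_congr (by ring) w4⟩,
      fun y hy => utd_cons_lt (by norm_num) (w5 y hy),
      low_cons (by norm_num) m1, hi_cons (by norm_num) m2,
      ⟨by norm_num, prefOK_congr (by ring) m3⟩, by simpa using m4,
      fun y hy => auu_cons (by norm_num) (m5 y hy), by simpa using hlen⟩
  | upC hgs hgw ihs ihw =>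
    obtain ⟨s1, s2, s3, s4, s5, t1, t2, t3, t4, t5, slen, shz⟩ := ihs
    obtain ⟨w1, w2, w3, w4, w5, m1, m2, m3, m4, m5, hlen⟩ := ihw
    rename_i j s s' w m
    constructor
    · exact low_cons (by omega) (low_cons (by norm_num) (low_append s1 w1))
    · refine ⟨by omega, by omega, ?_⟩
      show prefOK (0 + ((j : ℤ) + 1) + -1) (s ++ w)
      rw [prefOK_append]
      exact ⟨prefOK_congr (by ring) s2, prefOK_congr (by rw [s3]; ring) w2⟩
    · simp only [List.sum_cons, List.sum_append, s3, w3]; ring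
    · refine ⟨fun e => by omega, fun e => by norm_num at e, ?_⟩
      show noFlat (0 + ((j : ℤ) + 1) + -1) (s ++ w)
      rw [noFlat_append]
      exact ⟨noFlat_of_not_mem s4, noFlat_congr (by rw [s3]; ring) w4⟩
    · intro y hy
      have e : (((j : ℤ) + 1) :: -1 :: (s ++ w)) ++ y = ((j : ℤ) + 1) :: -1 :: (s ++ (w ++ y)) := by
        simp
      rw [e]
      exact utd_cons_cons' (fun _ => rfl) (utd_cons_lt (by norm_num) (s5 _ (w5 y hy)))
    · exact low_cons (by norm_num) (low_append t1 (low_cons (by norm_num) m1))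
    · exact hi_cons le_rfl (hi_append t2 (hi_cons (by norm_num) m2))
    · refine ⟨by norm_num, ?_⟩
      show prefOK (0 + 1) (s' ++ -1 :: m)
      rw [prefOK_append]
      refine ⟨prefOK_mono (by norm_num) t3, by rw [t4]; exact ⟨by norm_num, prefOK_congr (by ring) m3⟩⟩
    · simp only [List.sum_cons, List.sum_append, t4, m4]; ring
    · intro y hy
      have e : (1 :: s' ++ -1 :: m) ++ y = 1 :: (s' ++ (-1 :: (m ++ y))) := by simp
      rw [e]
      refine auu_cons' (fun b hb => ?_) (t5 _ (auu_cons (by norm_num) (m5 y hy)))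
      cases s' with
      | nil => simp at hb; omega
      | cons c r => simp only [headZero] at shz; simp [shz] at hb; omega
    · simp only [List.length_cons, List.length_append, slen, hlen]; omega
  | nilD => exact ⟨⟨low_nil, trivial, rfl, trivial, fun y hy => hy, low_nil, hi_nil, trivial,
      rfl, fun y hy => hy, rfl⟩, by simp, trivial⟩
  | upD hgs hgw ihs ihw =>
    obtain ⟨s1, s2, s3, s4, s5, t1, t2, t3, t4, t5, slen, shz⟩ := ihs
    obtain ⟨⟨w1, w2, w3, w4, w5, m1, m2, m3, m4, m5, hlen⟩, wnm, mnlf⟩ := ihw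
    rename_i j s s' w m
    refine ⟨?_, ?_, ?_⟩
    · constructor
      · exact low_cons (by omega) (low_cons (by norm_num) (low_append s1 w1))
      · refine ⟨by omega, by omega, ?_⟩
        show prefOK (0 + ((j : ℤ) + 1) + -1) (s ++ w)
        rw [prefOK_append]
        exact ⟨prefOK_congr (by ring) s2, prefOK_congr (by rw [s3]; ring) w2⟩
      · simp only [List.sum_cons, List.sum_append, s3, w3]; ring
      · refine ⟨fun e => by omega, fun e => by norm_num at e, ?_⟩
        show noFlat (0 + ((j : ℤ) + 1) + -1) (s ++ w)
        rw [noFlat_append]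
        exact ⟨noFlat_of_not_mem s4, noFlat_congr (by rw [s3]; ring) w4⟩
      · intro y hy
        have e : (((j : ℤ) + 1) :: -1 :: (s ++ w)) ++ y = ((j : ℤ) + 1) :: -1 :: (s ++ (w ++ y)) := by
          simp
        rw [e]
        exact utd_cons_cons' (fun _ => rfl) (utd_cons_lt (by norm_num) (s5 _ (w5 y hy)))
      · exact low_cons (by norm_num) (low_append t1 (low_cons (by norm_num) m1))
      · exact hi_cons le_rfl (hi_append t2 (hi_cons (by norm_num) m2))
      · refine ⟨by norm_num, ?_⟩
        show prefOK (0 + 1) (s' ++ -1 :: m)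
        rw [prefOK_append]
        refine ⟨prefOK_mono (by norm_num) t3, by rw [t4]; exact ⟨by norm_num, prefOK_congr (by ring) m3⟩⟩
      · simp only [List.sum_cons, List.sum_append, t4, m4]; ring
      · intro y hy
        have e : (1 :: s' ++ -1 :: m) ++ y = 1 :: (s' ++ (-1 :: (m ++ y))) := by simp
        rw [e]
        refine auu_cons' (fun b hb => ?_) (t5 _ (auu_cons (by norm_num) (m5 y hy)))
        cases s' with
        | nil => simp at hb; omega
        | cons c r => simp only [headZero] at shz; simp [shz] at hb; omega
      · simp only [List.length_cons, List.length_append, slen, hlen]; omega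
    · simp only [List.mem_cons, List.mem_append, not_or]
      exact ⟨by omega, by norm_num, s4, wnm⟩
    · refine ⟨fun e => by norm_num at e, ?_⟩
      show nlf (0 + 1) (s' ++ -1 :: m)
      rw [nlf_append]
      refine ⟨nlf_of_sp (sp_of_prefOK le_rfl (by norm_num) t3), ?_⟩
      rw [t4]
      exact ⟨fun e => by norm_num at e, nlf_congr (by ring) mnlf⟩
  | nilS =>
    show InvS 0 [] []
    exact ⟨low_nil, trivial, by simp, by simp, fun y hy => hy, low_nil, hi_nil, trivial, rfl,
      fun y hy => hy, rfl, trivial⟩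
  | consS hgd hgs ihd ihs =>
    obtain ⟨⟨d1, d2, d3, d4, d5, n1, n2, n3, n4, n5, dlen⟩, dnm, mdnlf⟩ := ihd
    obtain ⟨s1, s2, s3, s4, s5, t1, t2, t3, t4, t5, slen, shz⟩ := ihs
    rename_i j d md s s'
    show InvS (j+1) (d ++ -1 :: s) (0 :: (md ++ s'))
    constructor
    · exact low_append d1 (low_cons (by norm_num) s1)
    · rw [prefOK_append]
      refine ⟨prefOK_mono (by push_cast; omega) d2, ?_⟩
      rw [d3]
      refine ⟨by push_cast; omega, prefOK_congr (by push_cast; ring) s2⟩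
    · simp only [List.sum_append, List.sum_cons, d3, s3]; push_cast; ring
    · simp only [List.mem_append, List.mem_cons, not_or]
      exact ⟨dnm, by norm_num, s4⟩
    · intro y hy
      have e : (d ++ -1 :: s) ++ y = d ++ (-1 :: (s ++ y)) := by simp
      rw [e]
      exact d5 _ (utd_cons_lt (by norm_num) (s5 y hy))
    · exact low_cons (by norm_num) (low_append n1 t1)
    · exact hi_cons (by norm_num) (hi_append n2 t2)
    · refine ⟨by norm_num, ?_⟩
      show prefOK (0 + 0) (md ++ s')
      rw [prefOK_append]
      exact ⟨prefOK_congr (by ring) n3, prefOK_congr (by rw [n4]; ring) t3⟩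
    · simp only [List.sum_cons, List.sum_append, n4, t4]; ring
    · intro y hy
      have e : (0 :: (md ++ s')) ++ y = 0 :: (md ++ (s' ++ y)) := by simp
      rw [e]
      exact auu_cons (by norm_num) (n5 _ (t5 y hy))
    · simp only [List.length_cons, List.length_append, dlen, slen]; omega
    · exact rfl

end PsiAux
namespace PsiAux

lemma isLukas_of {w : List ℤ} (h1 : low w) (h2 : prefOK 0 w) (h3 : w.sum = 0) : IsLukas w :=
  ⟨h1, fun k => by simpa using (prefOK_iff le_rfl).1 h2 k, h3⟩

lemma isLukas_nil : IsLukas ([] : List ℤ) := ⟨by simp, by simp, rfl⟩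

def SoundP (ψ : List ℤ → List ℤ) : ℕ → List ℤ → List ℤ → Prop
  | 0, x, y => ψ x = y
  | 1, x, y => ψ x = y
  | (j+2), x, y => ∃ Ls : List (List ℤ), Ls.length = j ∧ (∀ M ∈ Ls, IsLukas M) ∧
      x = (Ls.map (fun M => M ++ [(-1:ℤ)])).flatten ∧ FI (Ls.map ψ) = y

lemma sound (ψ : List ℤ → List ℤ) (hψ : PsiEquations ψ) :
    ∀ {mode : ℕ} {x y : List ℤ}, G mode x y → SoundP ψ mode x y := by
  intro mode x y hg
  induction hg with
  | nilC => exact hψ.1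
  | flat hg ih =>
    have hc := inv_of_G hg
    have ih' : ψ _ = _ := ih
    show ψ _ = _
    rw [hψ.2.1 _ (isLukas_of hc.wlow hc.wpre hc.wsum), ih']
  | upC hgs hgw ihs ihw =>
    rename_i j s s' w m
    obtain ⟨Ls, hlen, hluk, hs, hFI⟩ := ihs
    have ihw' : ψ w = m := ihw
    have hw := inv_of_G hgw
    have key := hψ.2.2 (([]:List ℤ) :: Ls) w (by simp)
      (by intro M hM
          rcases List.mem_cons.mp hM with e | e
          · subst e; exact isLukas_nil
          · exact hluk M e)
      (isLukas_of hw.wlow hw.wpre hw.wsum)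
    have e1 : (((([]:List ℤ) :: Ls).length : ℕ) : ℤ) = (j:ℤ) + 1 := by
      simp [hlen]
    have e2 : (((([]:List ℤ) :: Ls).map fun M => M ++ [(-1:ℤ)]).flatten ++ w)
        = -1 :: (s ++ w) := by
      rw [List.map_cons, List.flatten_cons, ← hs]
      simp
    have e3 : (List.intersperse [(0:ℤ)] ((([]:List ℤ) :: Ls).map ψ)).flatten = s' := by
      rw [List.map_cons, hψ.1]
      exact hFI
    rw [e1, e2, e3, ihw'] at key
    exact key
  | nilD => exact hψ.1
  | upD hgs hgw ihs ihw =>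
    rename_i j s s' w m
    obtain ⟨Ls, hlen, hluk, hs, hFI⟩ := ihs
    have ihw' : ψ w = m := ihw
    have hw := inv_of_G hgw
    have key := hψ.2.2 (([]:List ℤ) :: Ls) w (by simp)
      (by intro M hM
          rcases List.mem_cons.mp hM with e | e
          · subst e; exact isLukas_nil
          · exact hluk M e)
      (isLukas_of hw.1.wlow hw.1.wpre hw.1.wsum)
    have e1 : (((([]:List ℤ) :: Ls).length : ℕ) : ℤ) = (j:ℤ) + 1 := by
      simp [hlen]
    have e2 : (((([]:List ℤ) :: Ls).map fun M => M ++ [(-1:ℤ)]).flatten ++ w)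
        = -1 :: (s ++ w) := by
      rw [List.map_cons, List.flatten_cons, ← hs]
      simp
    have e3 : (List.intersperse [(0:ℤ)] ((([]:List ℤ) :: Ls).map ψ)).flatten = s' := by
      rw [List.map_cons, hψ.1]
      exact hFI
    rw [e1, e2, e3, ihw'] at key
    exact key
  | nilS => exact ⟨[], rfl, by simp, by simp, by simp⟩
  | consS hgd hgs ihd ihs =>
    rename_i j d md s s'
    obtain ⟨Ls, hlen, hluk, hs, hFI⟩ := ihs
    have ihd' : ψ d = md := ihd
    have hdI := inv_of_G hgd
    refine ⟨d :: Ls, by simp [hlen], ?_, ?_, ?_⟩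
    · intro M hM
      rcases List.mem_cons.mp hM with e | e
      · subst e; exact isLukas_of hdI.1.wlow hdI.1.wpre hdI.1.wsum
      · exact hluk M e
    · rw [List.map_cons, List.flatten_cons, ← hs, List.append_assoc]
      rfl
    · rw [List.map_cons, FI_cons, ihd', hFI]

end PsiAux
namespace PsiAux

lemma uniq : ∀ {mode : ℕ} {x y : List ℤ}, G mode x y →
    ∀ (mode₂ : ℕ) (x₂ : List ℤ), G mode₂ x₂ y →
    ((mode < 2 → mode₂ < 2 → x = x₂) ∧ (2 ≤ mode → 2 ≤ mode₂ → mode = mode₂ ∧ x = x₂)) := by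
  intro mode x y hg
  induction hg with
  | nilC =>
    intro mode₂ x₂ hg2
    cases hg2 with
    | nilC => exact ⟨fun _ _ => rfl, fun h _ => absurd h (by omega)⟩
    | nilD => exact ⟨fun _ _ => rfl, fun h _ => absurd h (by omega)⟩
    | nilS => exact ⟨fun _ h => absurd h (by omega), fun h _ => absurd h (by omega)⟩
  | flat hg ih =>
    intro mode₂ x₂ hg2
    cases hg2 with
    | flat hg2' => exact ⟨fun _ _ => by rw [(ih _ _ hg2').1 (by omega) (by omega)],
        fun h _ => absurd h (by omega)⟩
    | consS hgd hgs => exact ⟨fun _ h => absurd h (by omega), fun h _ => absurd h (by omega)⟩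
  | upC hgs hgw ihs ihw =>
    rename_i j s s' w m
    intro mode₂ x₂ hg2
    obtain ⟨Y, hy, hg2⟩ : ∃ Y, Y = 1 :: s' ++ -1 :: m ∧ G mode₂ x₂ Y := ⟨_, rfl, hg2⟩
    cases hg2 with
    | nilC => simp at hy
    | nilD => simp at hy
    | nilS => simp at hy
    | flat hg2' => simp at hy
    | consS hgd2 hgs2 => simp at hy
    | upC hgs2 hgw2 =>
      rename_i j₂ s₂ s₂' w₂ m₂
      refine ⟨fun _ _ => ?_, fun h _ => absurd h (by omega)⟩
      injection hy with h1 heq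
      have i1 := inv_of_G hgs
      have i2 := inv_of_G hgs2
      obtain ⟨e1, e2⟩ := firstret_unique heq i2.msum i1.msum i2.mpre i1.mpre
      subst e1; subst e2
      obtain ⟨ej, es⟩ := (ihs _ _ hgs2).2 (by omega) (by omega)
      have ew := (ihw _ _ hgw2).1 (by omega) (by omega)
      have ejj : j = j₂ := by omega
      rw [ejj, es, ew]
    | upD hgs2 hgw2 =>
      rename_i j₂ s₂ s₂' w₂ m₂
      refine ⟨fun _ _ => ?_, fun h _ => absurd h (by omega)⟩
      injection hy with h1 heq
      have i1 := inv_of_G hgs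
      have i2 := inv_of_G hgs2
      obtain ⟨e1, e2⟩ := firstret_unique heq i2.msum i1.msum i2.mpre i1.mpre
      subst e1; subst e2
      obtain ⟨ej, es⟩ := (ihs _ _ hgs2).2 (by omega) (by omega)
      have ew := (ihw _ _ hgw2).1 (by omega) (by omega)
      have ejj : j = j₂ := by omega
      rw [ejj, es, ew]
  | nilD =>
    intro mode₂ x₂ hg2
    cases hg2 with
    | nilC => exact ⟨fun _ _ => rfl, fun h _ => absurd h (by omega)⟩
    | nilD => exact ⟨fun _ _ => rfl, fun h _ => absurd h (by omega)⟩
    | nilS => exact ⟨fun _ h => absurd h (by omega), fun h _ => absurd h (by omega)⟩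
  | upD hgs hgw ihs ihw =>
    rename_i j s s' w m
    intro mode₂ x₂ hg2
    obtain ⟨Y, hy, hg2⟩ : ∃ Y, Y = 1 :: s' ++ -1 :: m ∧ G mode₂ x₂ Y := ⟨_, rfl, hg2⟩
    cases hg2 with
    | nilC => simp at hy
    | nilD => simp at hy
    | nilS => simp at hy
    | flat hg2' => simp at hy
    | consS hgd2 hgs2 => simp at hy
    | upC hgs2 hgw2 =>
      rename_i j₂ s₂ s₂' w₂ m₂
      refine ⟨fun _ _ => ?_, fun h _ => absurd h (by omega)⟩
      injection hy with h1 heq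
      have i1 := inv_of_G hgs
      have i2 := inv_of_G hgs2
      obtain ⟨e1, e2⟩ := firstret_unique heq i2.msum i1.msum i2.mpre i1.mpre
      subst e1; subst e2
      obtain ⟨ej, es⟩ := (ihs _ _ hgs2).2 (by omega) (by omega)
      have ew := (ihw _ _ hgw2).1 (by omega) (by omega)
      have ejj : j = j₂ := by omega
      rw [ejj, es, ew]
    | upD hgs2 hgw2 =>
      rename_i j₂ s₂ s₂' w₂ m₂
      refine ⟨fun _ _ => ?_, fun h _ => absurd h (by omega)⟩
      injection hy with h1 heq
      have i1 := inv_of_G hgs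
      have i2 := inv_of_G hgs2
      obtain ⟨e1, e2⟩ := firstret_unique heq i2.msum i1.msum i2.mpre i1.mpre
      subst e1; subst e2
      obtain ⟨ej, es⟩ := (ihs _ _ hgs2).2 (by omega) (by omega)
      have ew := (ihw _ _ hgw2).1 (by omega) (by omega)
      have ejj : j = j₂ := by omega
      rw [ejj, es, ew]
  | nilS =>
    intro mode₂ x₂ hg2
    cases hg2 with
    | nilC => exact ⟨fun h _ => absurd h (by omega), fun _ h => absurd h (by omega)⟩
    | nilD => exact ⟨fun h _ => absurd h (by omega), fun _ h => absurd h (by omega)⟩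
    | nilS => exact ⟨fun h _ => absurd h (by omega), fun _ _ => ⟨rfl, rfl⟩⟩
  | consS hgd hgs ihd ihs =>
    rename_i j d md s s'
    intro mode₂ x₂ hg2
    obtain ⟨Y, hy, hg2⟩ : ∃ Y, Y = 0 :: (md ++ s') ∧ G mode₂ x₂ Y := ⟨_, rfl, hg2⟩
    cases hg2 with
    | nilC => simp at hy
    | nilD => simp at hy
    | nilS => simp at hy
    | upC hgs2 hgw2 => simp at hy
    | upD hgs2 hgw2 => simp at hy
    | flat hg2' => exact ⟨fun h _ => absurd h (by omega), fun _ h => absurd h (by omega)⟩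
    | consS hgd2 hgs2 =>
      rename_i j₂ d₂ md₂ s₂ s₂'
      refine ⟨fun h _ => absurd h (by omega), fun _ _ => ?_⟩
      injection hy with h1 heq
      have i1d := inv_of_G hgd
      have i2d := inv_of_G hgd2
      have i1s := inv_of_G hgs
      have i2s := inv_of_G hgs2
      obtain ⟨e1, e2⟩ := seg_unique heq i2d.1.msum i1d.1.msum i2d.2.2 i1d.2.2
        i2s.mhz i1s.mhz
      subst e1; subst e2
      obtain ⟨ej, es⟩ := (ihs _ _ hgs2).2 (by omega) (by omega)
      have ed := (ihd _ _ hgd2).1 (by omega) (by omega)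
      have ejj : j = j₂ := by omega
      exact ⟨by omega, by rw [es, ed]⟩

end PsiAux
namespace PsiAux

lemma utd_head_up {z : ℤ} {t : List ℤ} (h : utd (z :: t)) (hz : 1 ≤ z) :
    ∃ r, t = -1 :: r := by
  cases t with
  | nil => exact absurd hz (by simpa using h)
  | cons b r => exact ⟨r, by rw [h.1 hz]⟩

lemma last_neg_of_sp {a : List ℤ} (hne : a ≠ []) (hlow : low a) {h : ℤ} (hsp : sp h a)
    (hsum : h + a.sum ≤ 0) : a.getLast? = some (-1) := by
  refine last_neg hne hlow ?_
  have e : a.dropLast ++ [a.getLast hne] = a := List.dropLast_append_getLast hne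
  have h2 : sp h (a.dropLast ++ [a.getLast hne]) := by rw [e]; exact hsp
  rw [sp_append] at h2
  have h3 : 0 < h + a.dropLast.sum := h2.2.1
  omega

lemma last_neg_of_prefOK {d : List ℤ} (hne : d ≠ []) (hlow : low d) (hpre : prefOK 0 d)
    (hsum : d.sum = 0) (hnm : (0:ℤ) ∉ d) : d.getLast? = some (-1) := by
  refine last_neg hne hlow ?_
  have e : d.dropLast ++ [d.getLast hne] = d := List.dropLast_append_getLast hne
  have h2 : prefOK 0 (d.dropLast ++ [d.getLast hne]) := by rw [e]; exact hpre
  rw [prefOK_append] at h2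
  have h3 : 0 ≤ d.dropLast.sum := by simpa using prefOK_sum_nonneg le_rfl h2.1
  have h4 : d.getLast hne ≠ 0 := by
    intro h0
    exact hnm (h0 ▸ List.getLast_mem hne)
  have h5 : d.sum = d.dropLast.sum + d.getLast hne := by
    conv_lhs => rw [← e]
    simp
  omega

def Cconds (w : List ℤ) : Prop := low w ∧ prefOK 0 w ∧ w.sum = 0 ∧ noFlat 0 w ∧ utd w
def Dconds (w : List ℤ) : Prop := Cconds w ∧ (0:ℤ) ∉ w
def Sconds (j : ℕ) (s : List ℤ) : Prop :=
  low s ∧ (0:ℤ) ∉ s ∧ utd s ∧ s.sum = -(j:ℤ) ∧ sp (j:ℤ) s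

lemma exW : ∀ n : ℕ, (∀ w : List ℤ, w.length = n → Cconds w → ∃ m, G 0 w m) ∧
    (∀ w : List ℤ, w.length = n → Dconds w → ∃ m, G 1 w m) ∧
    (∀ (j : ℕ) (s : List ℤ), s.length = n → Sconds j s → ∃ s', G (j+2) s s') := by
  intro n
  induction n using Nat.strong_induction_on with
  | _ n IH =>
  refine ⟨?_, ?_, ?_⟩
  · -- C existence
    intro w hlen ⟨w1, w2, w3, w4, w5⟩
    cases w with
    | nil => exact ⟨[], G.nilC⟩
    | cons z t =>
      have hz0 : 0 ≤ z := by have := w2.1; omega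
      by_cases hz : z = 0
      · subst hz
        have ht : Cconds t :=
          ⟨fun x hx => w1 x (by simp [hx]), prefOK_congr (by ring) w2.2, by simpa using w3,
            noFlat_congr (by ring) w4.2, utd_tail w5⟩
        obtain ⟨mt, hG⟩ := (IH t.length (by simp at hlen; omega)).1 t rfl ht
        exact ⟨0 :: mt, G.flat hG⟩
      · have hz1 : 1 ≤ z := by omega
        obtain ⟨r, hr⟩ := utd_head_up w5 hz1
        subst hr
        set j : ℕ := (z - 1).toNat with hjdef
        have hj : (j : ℤ) = z - 1 := Int.toNat_of_nonneg (by omega)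
        have hrlow : low r := fun x hx => w1 x (by simp [hx])
        have hrpre : prefOK (j : ℤ) r := prefOK_congr (by rw [hj]; ring) w2.2.2
        have hrsum : r.sum = -(j : ℤ) := by
          simp only [List.sum_cons] at w3; omega
        have hrnf : noFlat (j : ℤ) r := noFlat_congr (by rw [hj]; ring) w4.2.2
        have hrutd : utd r := utd_tail (utd_tail w5)
        obtain ⟨a, b, e, ha, hsp, hbp, hbs⟩ := split_reach j r hrlow hrpre hrsum
        subst e
        have hna : noFlat (j:ℤ) a := (noFlat_append.1 hrnf).1
        have hsa : Sconds j a :=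
          ⟨fun x hx => hrlow x (by simp [hx]), not_mem_of_noFlat_sp hna hsp, ?_, ha, hsp⟩
        rotate_left
        · -- utd a
          rcases eq_or_ne a [] with h0 | h0
          · subst h0; exact utd_nil
          · exact utd_append_left hrutd (fun zz hzz => by
              rw [last_neg_of_sp h0 (fun x hx => hrlow x (by simp [hx])) hsp (by omega)] at hzz
              injection hzz with hzz; omega)
        have hcb : Cconds b :=
          ⟨fun x hx => hrlow x (by simp [hx]), hbp, hbs,
            noFlat_congr (by rw [ha]; ring) (noFlat_append.1 hrnf).2, utd_append_right hrutd⟩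
        have hlena : a.length < n := by simp at hlen; omega
        have hlenb : b.length < n := by simp at hlen; omega
        obtain ⟨s', hGS⟩ := (IH a.length hlena).2.2 j a rfl hsa
        obtain ⟨mb, hGC⟩ := (IH b.length hlenb).1 b rfl hcb
        refine ⟨1 :: s' ++ -1 :: mb, ?_⟩
        have ew : z = (j : ℤ) + 1 := by omega
        rw [ew]
        exact G.upC hGS hGC
  · -- D existence
    intro w hlen ⟨⟨w1, w2, w3, w4, w5⟩, wnm⟩
    cases w with
    | nil => exact ⟨[], G.nilD⟩
    | cons z t =>
      have hz0 : 0 ≤ z := by have := w2.1; omega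
      have hz : z ≠ 0 := fun h => wnm (by simp [h])
      have hz1 : 1 ≤ z := by omega
      obtain ⟨r, hr⟩ := utd_head_up w5 hz1
      subst hr
      set j : ℕ := (z - 1).toNat with hjdef
      have hj : (j : ℤ) = z - 1 := Int.toNat_of_nonneg (by omega)
      have hrlow : low r := fun x hx => w1 x (by simp [hx])
      have hrpre : prefOK (j : ℤ) r := prefOK_congr (by rw [hj]; ring) w2.2.2
      have hrsum : r.sum = -(j : ℤ) := by
        simp only [List.sum_cons] at w3; omega
      have hrnm : (0:ℤ) ∉ r := fun h => wnm (by simp [h])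
      have hrutd : utd r := utd_tail (utd_tail w5)
      obtain ⟨a, b, e, ha, hsp, hbp, hbs⟩ := split_reach j r hrlow hrpre hrsum
      subst e
      have hanm : (0:ℤ) ∉ a := fun h => hrnm (by simp [h])
      have hbnm : (0:ℤ) ∉ b := fun h => hrnm (by simp [h])
      have hsa : Sconds j a :=
        ⟨fun x hx => hrlow x (by simp [hx]), hanm, ?_, ha, hsp⟩
      rotate_left
      · rcases eq_or_ne a [] with h0 | h0
        · subst h0; exact utd_nil
        · exact utd_append_left hrutd (fun zz hzz => by
            rw [last_neg_of_sp h0 (fun x hx => hrlow x (by simp [hx])) hsp (by omega)] at hzz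
            injection hzz with hzz; omega)
      have hcb : Dconds b :=
        ⟨⟨fun x hx => hrlow x (by simp [hx]), hbp, hbs, noFlat_of_not_mem hbnm,
          utd_append_right hrutd⟩, hbnm⟩
      have hlena : a.length < n := by simp at hlen; omega
      have hlenb : b.length < n := by simp at hlen; omega
      obtain ⟨s', hGS⟩ := (IH a.length hlena).2.2 j a rfl hsa
      obtain ⟨mb, hGD⟩ := (IH b.length hlenb).2.1 b rfl hcb
      refine ⟨1 :: s' ++ -1 :: mb, ?_⟩
      have ew : z = (j : ℤ) + 1 := by omega
      rw [ew]
      exact G.upD hGS hGD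
  · -- S existence
    intro j s hlen ⟨s1, s2, s3, s4, s5⟩
    cases j with
    | zero =>
      cases s with
      | nil => exact ⟨[], G.nilS⟩
      | cons z t => exact absurd s5.1 (by norm_num)
    | succ j =>
      obtain ⟨d, s₂, e, hd, hdp⟩ := cross s 0 le_rfl (by rw [s4]; push_cast; omega) s1
      simp only [zero_add] at hd
      subst e
      have hdne : (0:ℤ) ∉ d := fun h => s2 (by simp [h])
      have hdlow : low d := fun x hx => s1 x (by simp [hx])
      have hdc : Dconds d := by
        refine ⟨⟨hdlow, hdp, hd, noFlat_of_not_mem hdne, ?_⟩, hdne⟩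
        rcases eq_or_ne d [] with h0 | h0
        · subst h0; exact utd_nil
        · exact utd_append_left s3 (fun zz hzz => by
            rw [last_neg_of_prefOK h0 hdlow hdp hd hdne] at hzz
            injection hzz with hzz; omega)
      have hs₂c : Sconds j s₂ := by
        refine ⟨fun x hx => s1 x (by simp [hx]), fun h => s2 (by simp [h]),
          utd_tail (utd_append_right s3), ?_, ?_⟩
        · simp only [List.sum_append, List.sum_cons] at s4
          push_cast at s4 ⊢
          omega
        · have := (sp_append.1 s5).2
          rw [hd] at this
          have h2 := this.2
          exact sp_congr (by push_cast; ring) h2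
      have hlend : d.length < n := by simp at hlen; omega
      have hlens : s₂.length < n := by simp at hlen; omega
      obtain ⟨md, hGD⟩ := (IH d.length hlend).2.1 d rfl hdc
      obtain ⟨s₂', hGS⟩ := (IH s₂.length hlens).2.2 j s₂ rfl hs₂c
      exact ⟨0 :: (md ++ s₂'), G.consS hGD hGS⟩

end PsiAux
namespace PsiAux

def Mconds (m : List ℤ) : Prop := low m ∧ hi m ∧ prefOK 0 m ∧ m.sum = 0 ∧ auu m
def Nconds (m : List ℤ) : Prop := Mconds m ∧ nlf 0 m
def Tconds (s' : List ℤ) : Prop :=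
  low s' ∧ hi s' ∧ prefOK 0 s' ∧ s'.sum = 0 ∧ auu s' ∧ headZero s'

lemma exM : ∀ n : ℕ, (∀ m : List ℤ, m.length = n → Mconds m → ∃ w, G 0 w m) ∧
    (∀ m : List ℤ, m.length = n → Nconds m → ∃ w, G 1 w m) ∧
    (∀ s' : List ℤ, s'.length = n → Tconds s' → ∃ (j : ℕ) (s : List ℤ), G (j+2) s s') := by
  intro n
  induction n using Nat.strong_induction_on with
  | _ n IH =>
  refine ⟨?_, ?_, ?_⟩
  · -- M existence
    intro m hlen ⟨m1, m2, m3, m4, m5⟩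
    cases m with
    | nil => exact ⟨[], G.nilC⟩
    | cons z t =>
      have hz0 : 0 ≤ z := by have := m3.1; omega
      have hz1 : z ≤ 1 := m2 z (by simp)
      by_cases hz : z = 0
      · subst hz
        have ht : Mconds t :=
          ⟨fun x hx => m1 x (by simp [hx]), fun x hx => m2 x (by simp [hx]),
            prefOK_congr (by ring) m3.2, by simpa using m4, auu_tail m5⟩
        obtain ⟨w, hG⟩ := (IH t.length (by simp at hlen; omega)).1 t rfl ht
        exact ⟨0 :: w, G.flat hG⟩
      · have hz2 : z = 1 := by omega
        subst hz2
        have htlow : low t := fun x hx => m1 x (by simp [hx])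
        obtain ⟨A, m', e, hA, hAp⟩ := cross t 0 le_rfl
          (by simp only [List.sum_cons] at m4; omega) htlow
        simp only [zero_add] at hA
        subst e
        have hTA : Tconds A := by
          refine ⟨fun x hx => htlow x (by simp [hx]), fun x hx => m2 x (by simp [hx]),
            hAp, hA, auu_append_left (auu_tail m5), ?_⟩
          cases A with
          | nil => trivial
          | cons c r =>
            have hc1 : ¬((1:ℤ) = 1 ∧ c = 1) := by
              have : auu (1 :: c :: (r ++ -1 :: m')) := by simpa using m5
              exact this.1
            have hc0 : 0 ≤ c := by have := hAp.1; omega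
            have hc2 : c ≤ 1 := m2 c (by simp)
            show c = 0
            omega
        have hm' : Mconds m' := by
          refine ⟨fun x hx => htlow x (by simp [hx]), fun x hx => m2 x (by simp [hx]), ?_, ?_,
            auu_tail (auu_append_right (auu_tail m5))⟩
          · have h2 := (prefOK_append.1 (m3.2 : prefOK (0+1) (A ++ -1 :: m'))).2
            rw [hA] at h2
            exact prefOK_congr (by ring) h2.2
          · simp only [List.sum_cons, List.sum_append, List.sum_cons] at m4
            omega
        have hlenA : A.length < n := by simp at hlen; omega
        have hlenm : m'.length < n := by simp at hlen; omega
        obtain ⟨j, s, hGS⟩ := (IH A.length hlenA).2.2 A rfl hTA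
        obtain ⟨w', hGC⟩ := (IH m'.length hlenm).1 m' rfl hm'
        exact ⟨((j:ℤ)+1) :: -1 :: (s ++ w'), G.upC hGS hGC⟩
  · -- N existence
    intro m hlen ⟨⟨m1, m2, m3, m4, m5⟩, m6⟩
    cases m with
    | nil => exact ⟨[], G.nilD⟩
    | cons z t =>
      have hz0 : 0 ≤ z := by have := m3.1; omega
      have hz1 : z ≤ 1 := m2 z (by simp)
      have hz : z ≠ 0 := fun h => m6.1 h rfl
      have hz2 : z = 1 := by omega
      subst hz2
      have htlow : low t := fun x hx => m1 x (by simp [hx])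
      obtain ⟨A, m', e, hA, hAp⟩ := cross t 0 le_rfl
        (by simp only [List.sum_cons] at m4; omega) htlow
      simp only [zero_add] at hA
      subst e
      have hTA : Tconds A := by
        refine ⟨fun x hx => htlow x (by simp [hx]), fun x hx => m2 x (by simp [hx]),
          hAp, hA, auu_append_left (auu_tail m5), ?_⟩
        cases A with
        | nil => trivial
        | cons c r =>
          have hc1 : ¬((1:ℤ) = 1 ∧ c = 1) := by
            have : auu (1 :: c :: (r ++ -1 :: m')) := by simpa using m5
            exact this.1
          have hc0 : 0 ≤ c := by have := hAp.1; omega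
          have hc2 : c ≤ 1 := m2 c (by simp)
          show c = 0
          omega
      have hm' : Nconds m' := by
        refine ⟨⟨fun x hx => htlow x (by simp [hx]), fun x hx => m2 x (by simp [hx]), ?_, ?_,
          auu_tail (auu_append_right (auu_tail m5))⟩, ?_⟩
        · have h2 := (prefOK_append.1 (m3.2 : prefOK (0+1) (A ++ -1 :: m'))).2
          rw [hA] at h2
          exact prefOK_congr (by ring) h2.2
        · simp only [List.sum_cons, List.sum_append, List.sum_cons] at m4
          omega
        · have h2 := (nlf_append.1 (m6.2 : nlf (0+1) (A ++ -1 :: m'))).2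
          rw [hA] at h2
          exact nlf_congr (by ring) h2.2
      have hlenA : A.length < n := by simp at hlen; omega
      have hlenm : m'.length < n := by simp at hlen; omega
      obtain ⟨j, s, hGS⟩ := (IH A.length hlenA).2.2 A rfl hTA
      obtain ⟨w', hGD⟩ := (IH m'.length hlenm).2.1 m' rfl hm'
      exact ⟨((j:ℤ)+1) :: -1 :: (s ++ w'), G.upD hGS hGD⟩
  · -- T existence
    intro s' hlen ⟨t1, t2, t3, t4, t5, t6⟩
    cases s' with
    | nil => exact ⟨0, [], G.nilS⟩
    | cons z rest =>
      have hz : z = 0 := t6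
      subst hz
      obtain ⟨a, b, e, hnlf, hb⟩ := split_zero rest 0
      subst e
      have hrp : prefOK 0 (a ++ b) := prefOK_congr (by ring) t3.2
      have hasum : a.sum = 0 := by
        rcases hb with h0 | ⟨b', e', hsum⟩
        · subst h0
          simpa using t4
        · omega
      have hNa : Nconds a := by
        refine ⟨⟨fun x hx => t1 x (by simp [hx]), fun x hx => t2 x (by simp [hx]),
          (prefOK_append.1 hrp).1, hasum, auu_append_left (auu_tail t5)⟩, hnlf⟩
      have hTb : Tconds b := by
        refine ⟨fun x hx => t1 x (by simp [hx]), fun x hx => t2 x (by simp [hx]), ?_, ?_,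
          auu_append_right (auu_tail t5), ?_⟩
        · have h2 := (prefOK_append.1 hrp).2
          exact prefOK_congr (by rw [hasum]; ring) h2
        · simp only [List.sum_cons, List.sum_append] at t4
          omega
        · rcases hb with h0 | ⟨b', e', hsum⟩
          · subst h0; trivial
          · subst e'; exact rfl
      have hlena : a.length < n := by simp at hlen; omega
      have hlenb : b.length < n := by simp at hlen; omega
      obtain ⟨wa, hGD⟩ := (IH a.length hlena).2.1 a rfl hNa
      obtain ⟨j₂, s₂, hGS⟩ := (IH b.length hlenb).2.2 b rfl hTb
      exact ⟨j₂ + 1, wa ++ -1 :: s₂, G.consS hGD hGS⟩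

end PsiAux
namespace PsiAux

lemma prefOK_zero_iff {w : List ℤ} : prefOK 0 w ↔ ∀ k, 0 ≤ (w.take k).sum := by
  simpa using (prefOK_iff (w := w) (le_refl (0:ℤ)))

lemma noFlat_zero_iff {w : List ℤ} : noFlat 0 w ↔ NoFlatAtPosHeight w := by
  unfold NoFlatAtPosHeight
  simpa using (noFlat_iff (w := w) (h := 0))

lemma utdF_utd {w : List ℤ} (h : utdF w) : utd w := by
  have := h [] utd_nil
  simpa using this

lemma auuF_auu {w : List ℤ} (h : auuF w) : auu w := by
  have := h [] auu_nil
  simpa using this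

end PsiAux


/-- `ψ` restricts to a bijection from the set `C_n` of Łukasiewicz paths of
length `n` with no flat at positive height in which every up step is followed by
a down step, onto the set of Motzkin paths of length `n` avoiding `UU`. -/
theorem psi_bij_C_to_avoidUU (ψ : List ℤ → List ℤ) (hψ : PsiEquations ψ) (n : ℕ) :
    Set.BijOn ψ
      {w : List ℤ | IsLukas w ∧ NoFlatAtPosHeight w ∧ UpThenDown w ∧ w.length = n}
      {w : List ℤ | IsMotzkin w ∧ AvoidsUU w ∧ w.length = n} := by
  open PsiAux in
  have toC : ∀ w : List ℤ, IsLukas w → NoFlatAtPosHeight w → UpThenDown w → Cconds w := by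
    intro w h1 h2 h3
    exact ⟨h1.1, prefOK_zero_iff.2 h1.2.1, h1.2.2, noFlat_zero_iff.2 h2, utd_iff.1 h3⟩
  have parse : ∀ w ∈ {w : List ℤ | IsLukas w ∧ NoFlatAtPosHeight w ∧ UpThenDown w ∧ w.length = n},
      ∃ m, G 0 w m ∧ ψ w = m := by
    intro w hw
    obtain ⟨h1, h2, h3, hlen⟩ := hw
    obtain ⟨m, hG⟩ := (exW w.length).1 w rfl (toC w h1 h2 h3)
    exact ⟨m, hG, sound ψ hψ hG⟩
  refine ⟨?_, ?_, ?_⟩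
  · -- MapsTo
    intro w hw
    obtain ⟨m, hG, hpsi⟩ := parse w hw
    have inv : InvC w m := inv_of_G hG
    have hlen : w.length = n := hw.2.2.2
    refine Set.mem_setOf.2 ?_
    rw [hpsi]
    refine ⟨⟨isLukas_of inv.mlow inv.mpre inv.msum, inv.mhi⟩, auu_iff.2 (auuF_auu inv.mauu), ?_⟩
    rw [← inv.len, hlen]
  · -- InjOn
    intro w₁ h₁ w₂ h₂ he
    obtain ⟨m₁, hG1, hp1⟩ := parse w₁ h₁
    obtain ⟨m₂, hG2, hp2⟩ := parse w₂ h₂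
    have hm : m₁ = m₂ := by rw [← hp1, ← hp2, he]
    subst hm
    exact (uniq hG1 0 w₂ hG2).1 (by omega) (by omega)
  · -- SurjOn
    intro m hm
    obtain ⟨⟨hL, hhi⟩, hA, hlen⟩ := hm
    obtain ⟨w, hG⟩ := (exM m.length).1 m rfl
      ⟨hL.1, hhi, prefOK_zero_iff.2 hL.2.1, hL.2.2, auu_iff.1 hA⟩
    have inv : InvC w m := inv_of_G hG
    refine ⟨w, ?_, sound ψ hψ hG⟩
    exact ⟨isLukas_of inv.wlow inv.wpre inv.wsum, noFlat_zero_iff.1 inv.wnf,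
      utd_iff.2 (utdF_utd inv.wutd), by rw [inv.len, hlen]⟩
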